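/- For every finite simple graph G = (V,E) and every integer k ≥ 1, there exists a set E* ⊆ E with |E*| ≤ k·|V| such that for every nonempty proper vertex set S ⊆ V with |∂S| ≤ k, every edge of ∂S belongs to E*. -/
import Mathlib


open Classical

noncomputable section

/-- The edge set of `G` as a `Finset` of `Sym2 V`. -/
def edgeFin {V : Type*} [Fintype V] (G : SimpleGraph V) : Finset (Sym2 V) :=
  Finset.univ.filter (fun e => e ∈ G.edgeSet)

/-- The set of edges of `G` with exactly one endpoint in `S` (the cut `(S, V ∖ S)`). -/
def cutEdges {V : Type*} [Fintype V] (G : SimpleGraph V) (S : Finset V) : Finset (Sym2 V) :=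
  Finset.univ.filter (fun e => e ∈ G.edgeSet ∧ ∃ u v, e = s(u, v) ∧ u ∈ S ∧ v ∉ S)

/-- The probability, under independent `Bernoulli(p)` sampling of each element of the
ground set `E`, that the sampled subset satisfies `Q`. -/
def cubePr {β : Type*} [DecidableEq β] (E : Finset β) (p : ℝ) (Q : Finset β → Prop) : ℝ :=
  ∑ S ∈ E.powerset, p ^ S.card * (1 - p) ^ (E.card - S.card) * (if Q S then 1 else 0)

/-- `C` is (the vertex set of) a connected component of `H`. -/
def IsCompOf {V : Type*} [Fintype V] (H : SimpleGraph V) (C : Finset V) : Prop :=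
  ∃ v : V, C = Finset.univ.filter (fun u => H.Reachable v u)

namespace SparseCert

open SimpleGraph

variable {V : Type*}

/-- Reachability in a graph with one extra edge added decomposes. -/
lemma reachable_sup_edge {G : SimpleGraph V} {u v x y : V}
    (h : (G ⊔ SimpleGraph.edge u v).Reachable x y) :
    G.Reachable x y ∨ (G.Reachable x u ∧ G.Reachable v y) ∨
      (G.Reachable x v ∧ G.Reachable u y) := by
  obtain ⟨w⟩ := h
  induction w with
  | nil => exact Or.inl (Reachable.refl _)
  | @cons a b c hab p ih =>
    rcases hab with hG | hE
    · rcases ih with h1 | ⟨h1, h2⟩ | ⟨h1, h2⟩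
      · exact Or.inl (hG.reachable.trans h1)
      · exact Or.inr (Or.inl ⟨hG.reachable.trans h1, h2⟩)
      · exact Or.inr (Or.inr ⟨hG.reachable.trans h1, h2⟩)
    · rw [edge_adj] at hE
      rcases hE.1 with ⟨rfl, rfl⟩ | ⟨rfl, rfl⟩
      · rcases ih with h1 | ⟨h1, h2⟩ | ⟨h1, h2⟩
        · exact Or.inr (Or.inl ⟨Reachable.refl _, h1⟩)
        · exact Or.inr (Or.inl ⟨Reachable.refl _, h2⟩)
        · exact Or.inl h2
      · rcases ih with h1 | ⟨h1, h2⟩ | ⟨h1, h2⟩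
        · exact Or.inr (Or.inr ⟨Reachable.refl _, h1⟩)
        · exact Or.inl h2
        · exact Or.inr (Or.inr ⟨Reachable.refl _, h2⟩)

/-- Adding an edge between two vertices in different components strictly decreases
the number of connected components. -/
lemma ncomp_lt [Fintype V] {G : SimpleGraph V} {u v : V} (hne : u ≠ v)
    (h : ¬ G.Reachable u v) :
    Nat.card (G ⊔ SimpleGraph.edge u v).ConnectedComponent <
      Nat.card G.ConnectedComponent := by
  set G' := G ⊔ SimpleGraph.edge u v with hG'
  let f : G →g G' := Hom.ofLE le_sup_left
  let F : G.ConnectedComponent → G'.ConnectedComponent := ConnectedComponent.map f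
  have hsurj : Function.Surjective F := by
    intro c
    refine c.ind fun x => ⟨G.connectedComponentMk x, rfl⟩
  have hninj : ¬ Function.Injective F := by
    intro hinj
    have hadj : G'.Adj u v := by
      refine Or.inr ?_
      rw [edge_adj]
      exact ⟨Or.inl ⟨rfl, rfl⟩, hne⟩
    have : G.connectedComponentMk u = G.connectedComponentMk v := by
      apply hinj
      exact ConnectedComponent.sound hadj.reachable
    exact h (ConnectedComponent.exact this)
  haveI : Finite G.ConnectedComponent :=
    Finite.of_surjective G.connectedComponentMk Quot.mk_surjective
  haveI : Finite G'.ConnectedComponent :=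
    Finite.of_surjective G'.connectedComponentMk Quot.mk_surjective
  letI := Fintype.ofFinite G.ConnectedComponent
  letI := Fintype.ofFinite G'.ConnectedComponent
  rw [Nat.card_eq_fintype_card, Nat.card_eq_fintype_card]
  exact Fintype.card_lt_of_surjective_not_injective F hsurj hninj

/-- Every finite edge set contains a "spanning forest": a subset of size at most
`|V| - #components` preserving reachability. -/
lemma exists_forest [Fintype V] (A : Finset (Sym2 V)) (hA : ∀ e ∈ A, ¬ e.IsDiag) :
    ∃ F : Finset (Sym2 V), F ⊆ A ∧
      F.card + Nat.card (SimpleGraph.fromEdgeSet (↑F : Set (Sym2 V))).ConnectedComponent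
        ≤ Fintype.card V ∧
      ∀ x y : V, (SimpleGraph.fromEdgeSet (↑A : Set (Sym2 V))).Reachable x y →
        (SimpleGraph.fromEdgeSet (↑F : Set (Sym2 V))).Reachable x y := by
  revert hA
  induction A using Finset.induction_on with
  | empty =>
    intro _
    refine ⟨∅, Finset.Subset.refl _, ?_, fun x y h => h⟩
    have h1 : Nat.card (SimpleGraph.fromEdgeSet
        (↑(∅ : Finset (Sym2 V)) : Set (Sym2 V))).ConnectedComponent ≤ Nat.card V :=
      Nat.card_le_card_of_surjective _ Quot.mk_surjective
    simpa [Nat.card_eq_fintype_card] using h1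
  | @insert e s he ih =>
    revert he
    induction e using Sym2.ind with
    | _ u v =>
      intro he hA
      obtain ⟨F, hFs, hcard, hreach⟩ := ih fun e' he' => hA e' (Finset.mem_insert_of_mem he')
      have hne : u ≠ v := by
        have := hA _ (Finset.mem_insert_self _ _)
        simpa [Sym2.mk_isDiag_iff] using this
      have hins : (SimpleGraph.fromEdgeSet (↑(insert (s(u,v)) s) : Set (Sym2 V))) =
          SimpleGraph.fromEdgeSet (↑s : Set (Sym2 V)) ⊔ SimpleGraph.edge u v := by
        rw [Finset.coe_insert, Set.insert_eq, fromEdgeSet_union, sup_comm]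
        rfl
      by_cases hr : (SimpleGraph.fromEdgeSet (↑F : Set (Sym2 V))).Reachable u v
      · refine ⟨F, hFs.trans (Finset.subset_insert _ _), hcard, ?_⟩
        intro x y hxy
        rw [hins] at hxy
        rcases reachable_sup_edge hxy with h1 | ⟨h1, h2⟩ | ⟨h1, h2⟩
        · exact hreach _ _ h1
        · exact ((hreach _ _ h1).trans hr).trans (hreach _ _ h2)
        · exact ((hreach _ _ h1).trans hr.symm).trans (hreach _ _ h2)
      · have hF' : (SimpleGraph.fromEdgeSet (↑(insert (s(u,v)) F) : Set (Sym2 V))) =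
            SimpleGraph.fromEdgeSet (↑F : Set (Sym2 V)) ⊔ SimpleGraph.edge u v := by
          rw [Finset.coe_insert, Set.insert_eq, fromEdgeSet_union, sup_comm]
          rfl
        have hadj : (SimpleGraph.fromEdgeSet (↑F : Set (Sym2 V)) ⊔
            SimpleGraph.edge u v).Adj u v := by
          refine Or.inr ?_
          rw [edge_adj]
          exact ⟨Or.inl ⟨rfl, rfl⟩, hne⟩
        refine ⟨insert (s(u,v)) F, Finset.insert_subset_insert _ hFs, ?_, ?_⟩
        · rw [Finset.card_insert_of_notMem (fun hm => he (hFs hm)), hF']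
          have := ncomp_lt hne hr
          omega
        · intro x y hxy
          rw [hins] at hxy
          rw [hF']
          rcases reachable_sup_edge hxy with h1 | ⟨h1, h2⟩ | ⟨h1, h2⟩
          · exact (hreach _ _ h1).mono le_sup_left
          · exact (((hreach _ _ h1).mono le_sup_left).trans hadj.reachable).trans
              ((hreach _ _ h2).mono le_sup_left)
          · exact (((hreach _ _ h1).mono le_sup_left).trans hadj.reachable.symm).trans
              ((hreach _ _ h2).mono le_sup_left)

/-- There exist `k` pairwise disjoint forests `F₀, …, F_{k-1}` inside `G` (taken
greedily) such that every edge of `G` avoiding all of them has its endpoints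
connected within each forest. -/
lemma exists_forests [Fintype V] (G : SimpleGraph V) (k : ℕ) :
    ∃ Fs : Fin k → Finset (Sym2 V),
      (∀ i, Fs i ⊆ edgeFin G) ∧
      (∀ i, (Fs i).card ≤ Fintype.card V) ∧
      (∀ i j, i ≠ j → Disjoint (Fs i) (Fs j)) ∧
      (∀ u v : V, s(u,v) ∈ edgeFin G → (∀ i, s(u,v) ∉ Fs i) →
        ∀ i, (SimpleGraph.fromEdgeSet (↑(Fs i) : Set (Sym2 V))).Reachable u v) := by
  induction k with
  | zero => exact ⟨fun i => ∅, fun i => i.elim0, fun i => i.elim0,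
      fun i => i.elim0, fun u v _ _ i => i.elim0⟩
  | succ k ih =>
    obtain ⟨Fs, h1, h2, h3, h4⟩ := ih
    set A := edgeFin G \ Finset.univ.biUnion (fun i : Fin k => Fs i) with hAdef
    have hAnd : ∀ e ∈ A, ¬ e.IsDiag := by
      intro e heA
      have hmem : e ∈ edgeFin G := (Finset.mem_sdiff.mp heA).1
      exact G.not_isDiag_of_mem_edgeSet (Finset.mem_filter.mp hmem).2
    obtain ⟨F, hFA, hFcard, hFreach⟩ := exists_forest A hAnd
    have hFdisj : ∀ j : Fin k, Disjoint F (Fs j) := by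
      intro j
      rw [Finset.disjoint_left]
      intro e heF heFs
      have := (Finset.mem_sdiff.mp (hFA heF)).2
      exact this (Finset.mem_biUnion.mpr ⟨j, Finset.mem_univ _, heFs⟩)
    refine ⟨Fin.snoc Fs F, ?_, ?_, ?_, ?_⟩
    · intro i
      refine Fin.lastCases ?_ ?_ i
      · rw [Fin.snoc_last]
        exact hFA.trans (Finset.sdiff_subset)
      · intro j
        rw [Fin.snoc_castSucc]
        exact h1 j
    · intro i
      refine Fin.lastCases ?_ ?_ i
      · rw [Fin.snoc_last]
        exact le_trans (Nat.le_add_right _ _) hFcard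
      · intro j
        rw [Fin.snoc_castSucc]
        exact h2 j
    · intro i j
      refine Fin.lastCases ?_ (fun i' => ?_) i <;> refine Fin.lastCases ?_ (fun j' => ?_) j <;>
        intro hij
      · exact absurd rfl hij
      · rw [Fin.snoc_last, Fin.snoc_castSucc]
        exact hFdisj j'
      · rw [Fin.snoc_last, Fin.snoc_castSucc]
        exact (hFdisj i').symm
      · rw [Fin.snoc_castSucc, Fin.snoc_castSucc]
        exact h3 i' j' (fun h => hij (congrArg Fin.castSucc h))
    · intro u v hmem hnot i
      refine Fin.lastCases ?_ ?_ i
      · rw [Fin.snoc_last]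
        have heA : s(u,v) ∈ A := by
          rw [hAdef, Finset.mem_sdiff]
          refine ⟨hmem, fun hbi => ?_⟩
          obtain ⟨j, _, hj⟩ := Finset.mem_biUnion.mp hbi
          exact hnot (Fin.castSucc j) (by rwa [Fin.snoc_castSucc])
        have hne : u ≠ v := by
          have := hAnd _ heA
          simpa [Sym2.mk_isDiag_iff] using this
        have hadj : (SimpleGraph.fromEdgeSet (↑A : Set (Sym2 V))).Adj u v := by
          rw [fromEdgeSet_adj]
          exact ⟨by exact_mod_cast heA, hne⟩
        exact hFreach u v hadj.reachable
      · intro j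
        rw [Fin.snoc_castSucc]
        exact h4 u v hmem
          (fun j' => by have := hnot (Fin.castSucc j'); rwa [Fin.snoc_castSucc] at this) j

end SparseCert

/-- Sparse certificates exist: for every finite simple graph `G` and
`k ≥ 1` there is `E* ⊆ E` with `|E*| ≤ k·|V|` containing every edge that lies in some
cut of size at most `k`. -/
theorem statement9 {V : Type*} [Fintype V] (G : SimpleGraph V) (k : ℕ) (hk : 1 ≤ k) :
    ∃ Estar : Finset (Sym2 V), Estar ⊆ edgeFin G ∧ Estar.card ≤ k * Fintype.card V ∧
      ∀ S : Finset V, S.Nonempty → S ≠ Finset.univ → (cutEdges G S).card ≤ k →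
        cutEdges G S ⊆ Estar := by
  classical
  obtain ⟨Fs, h1, h2, h3, h4⟩ := SparseCert.exists_forests G k
  refine ⟨Finset.univ.biUnion (fun i : Fin k => Fs i), ?_, ?_, ?_⟩
  · intro e he
    obtain ⟨i, _, hei⟩ := Finset.mem_biUnion.mp he
    exact h1 i hei
  · calc (Finset.univ.biUnion (fun i : Fin k => Fs i)).card
        ≤ ∑ i : Fin k, (Fs i).card := Finset.card_biUnion_le
      _ ≤ ∑ _i : Fin k, Fintype.card V := Finset.sum_le_sum fun i _ => h2 i
      _ = k * Fintype.card V := by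
          simp [Finset.sum_const, Finset.card_univ]
  · intro S hSne hSuniv hcut e he
    by_contra heE
    obtain ⟨heG, u, v, heq, huS, hvS⟩ := (Finset.mem_filter.mp he).2
    subst heq
    have hnot : ∀ i, s(u,v) ∉ Fs i := fun i hm =>
      heE (Finset.mem_biUnion.mpr ⟨i, Finset.mem_univ _, hm⟩)
    have hmemEF : s(u,v) ∈ edgeFin G := Finset.mem_filter.mpr ⟨Finset.mem_univ _, heG⟩
    have key : ∀ i : Fin k, ∃ f, f ∈ Fs i ∧ f ∈ cutEdges G S := by
      intro i
      obtain ⟨w⟩ := h4 u v hmemEF hnot i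
      obtain ⟨d, _, hdS, hdS'⟩ := w.exists_boundary_dart (↑S : Set V)
        (Finset.mem_coe.mpr huS) (fun hm => hvS (Finset.mem_coe.mp hm))
      have hadj := d.adj
      rw [SimpleGraph.fromEdgeSet_adj] at hadj
      refine ⟨s(d.fst, d.snd), by exact_mod_cast hadj.1, ?_⟩
      refine Finset.mem_filter.mpr ⟨Finset.mem_univ _, ?_, d.fst, d.snd, rfl,
        Finset.mem_coe.mp hdS, fun hm => hdS' (Finset.mem_coe.mpr hm)⟩
      have hmem : s(d.fst, d.snd) ∈ edgeFin G := h1 i (by exact_mod_cast hadj.1)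
      exact (Finset.mem_filter.mp hmem).2
    choose c hc1 hc2 using key
    have hcinj : Function.Injective c := by
      intro i j hij
      by_contra hne
      exact (Finset.disjoint_left.mp (h3 i j hne)) (hc1 i) (by rw [hij]; exact hc1 j)
    have hsub : insert (s(u,v)) (Finset.univ.image c) ⊆ cutEdges G S := by
      refine Finset.insert_subset he ?_
      intro f hf
      obtain ⟨i, _, rfl⟩ := Finset.mem_image.mp hf
      exact hc2 i
    have hnotmem : s(u,v) ∉ Finset.univ.image c := by
      intro hm
      obtain ⟨i, _, hi⟩ := Finset.mem_image.mp hm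
      exact hnot i (by rw [← hi]; exact hc1 i)
    have hle := Finset.card_le_card hsub
    rw [Finset.card_insert_of_notMem hnotmem,
      Finset.card_image_of_injective _ hcinj, Finset.card_univ, Fintype.card_fin] at hle
    omega
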